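/- Let p be a prime and let G = Z_{p^{α₁}} × Z_{p^{α₂}} × ⋯ × Z_{p^{α_k}} be a finite abelian p-group with 1 ≤ α₁ ≤ α₂ ≤ … ≤ α_k. Then ψ(G) = 1 + ∑_{α=1}^{α_k} ( p^{2α} · f(α) − p^{2α−1} · f(α−1) ), where f(α) = p^{∑_{i=1}^{k−1} min(α_i, α)} (equivalently, f(α) = p^{(k−j)α + α₁ + ⋯ + α_{j−1}} whenever α_{j−1} ≤ α ≤ α_j, with the conventions α₀ = 0 and f(α) = p^{α₁+⋯+α_{k−1}} for α ≥ α_{k−1}). -/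

import Mathlib

/-- `psi G` is the sum of the orders of all elements of the finite group `G`. -/
noncomputable def psi (G : Type*) [Monoid G] [Fintype G] : ℕ := ∑ a : G, orderOf a

private lemma count_pow_eq_one_zmod (n N : ℕ) [NeZero n] :
    (Finset.univ.filter fun y : Multiplicative (ZMod n) => y ^ N = 1).card = Nat.gcd n N := by
  classical
  have hn : n ≠ 0 := NeZero.ne n
  set c : ZMod n := (N : ZMod n) with hc
  set f : ZMod n →+ ZMod n := AddMonoidHom.mulLeft c with hf
  have hrange : f.range = AddSubgroup.zmultiples c := by
    ext y
    constructor
    · rintro ⟨x, rfl⟩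
      have h1 : f x = x.val • c := by
        simp [hf, AddMonoidHom.mulLeft, nsmul_eq_mul, mul_comm, ZMod.natCast_val]
      rw [h1]
      exact AddSubgroup.nsmul_mem _ (AddSubgroup.mem_zmultiples c) _
    · rintro ⟨z, rfl⟩
      exact ⟨(z : ZMod n), by simp [hf, AddMonoidHom.mulLeft, zsmul_eq_mul, mul_comm]⟩
  have hcardrange : Nat.card f.range = n / Nat.gcd n N := by
    rw [hrange, Nat.card_zmultiples, hc, ZMod.addOrderOf_coe _ hn]
  have hker : Nat.card f.ker = Nat.gcd n N := by
    have h2 := AddSubgroup.card_eq_card_quotient_mul_card_addSubgroup (f.ker)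
    rw [Nat.card_congr (QuotientAddGroup.quotientKerEquivRange f).toEquiv, hcardrange,
      Nat.card_zmod] at h2
    have hg : Nat.gcd n N ∣ n := Nat.gcd_dvd_left n N
    have hge : n / Nat.gcd n N ≠ 0 := by
      have := Nat.div_pos (Nat.le_of_dvd (Nat.pos_of_ne_zero hn) hg) (Nat.pos_of_ne_zero (by
        intro h; exact hn (by simpa [h] using hg)))
      omega
    have h3 : n / (n / Nat.gcd n N) = Nat.card f.ker :=
      Nat.div_eq_of_eq_mul_left (Nat.pos_of_ne_zero hge) (by rw [mul_comm]; exact h2)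
    rw [← h3, Nat.div_div_self hg hn]
  have hiff : ∀ y : Multiplicative (ZMod n), y ^ N = 1 ↔ y.toAdd ∈ f.ker := by
    intro y
    rw [AddMonoidHom.mem_ker]
    constructor
    · intro h
      have := congrArg Multiplicative.toAdd h
      simp only [toAdd_pow, toAdd_one] at this
      simpa [hf, AddMonoidHom.mulLeft, hc, nsmul_eq_mul] using this
    · intro h
      have : N • y.toAdd = 0 := by simpa [hf, AddMonoidHom.mulLeft, hc, nsmul_eq_mul] using h
      apply Multiplicative.toAdd.injective
      simpa [toAdd_pow] using this
  have h1 : (Finset.univ.filter fun y : Multiplicative (ZMod n) => y ^ N = 1).card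
      = Fintype.card {y : Multiplicative (ZMod n) // y ^ N = 1} := (Fintype.card_subtype _).symm
  rw [h1]
  have e : {y : Multiplicative (ZMod n) // y ^ N = 1} ≃ f.ker :=
    Equiv.subtypeEquiv Multiplicative.toAdd (by intro y; exact hiff y)
  rw [Fintype.card_congr e, ← Nat.card_eq_fintype_card, hker]

theorem psi_abelian_p_group (p : ℕ) [Fact p.Prime] (k : ℕ) (α : Fin (k + 1) → ℕ)
    (h1 : ∀ i, 1 ≤ α i) (hmono : Monotone α) :
    (psi (∀ i, Multiplicative (ZMod (p ^ α i))) : ℤ) =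
      1 + ∑ a ∈ Finset.Icc 1 (α (Fin.last k)),
        ((p : ℤ) ^ (2 * a) * (p : ℤ) ^ (∑ i : Fin k, min (α i.castSucc) a)
          - (p : ℤ) ^ (2 * a - 1) * (p : ℤ) ^ (∑ i : Fin k, min (α i.castSucc) (a - 1))) := by
  classical
  have hp : p.Prime := Fact.out
  have hp1 : 1 < p := hp.one_lt
  set A := α (Fin.last k) with hA
  set S : ℕ → ℕ := fun a => ∑ i : Fin (k + 1), min (α i) a with hS
  set T : ℕ → ℕ := fun a => ∑ i : Fin k, min (α i.castSucc) a with hT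
  -- gcd of prime powers
  have hgcd : ∀ (m a : ℕ), Nat.gcd (p ^ m) (p ^ a) = p ^ min m a := by
    intro m a
    rcases le_total m a with h | h
    · rw [Nat.gcd_eq_left (pow_dvd_pow p h), min_eq_left h]
    · rw [Nat.gcd_eq_right (pow_dvd_pow p h), min_eq_right h]
  -- counting elements killed by p ^ a
  have hcount : ∀ a : ℕ, ((Finset.univ.filter fun x : ∀ i, Multiplicative (ZMod (p ^ α i)) => x ^ p ^ a = 1).card : ℤ)
      = (p : ℤ) ^ S a := by
    intro a
    have hset : (Finset.univ.filter fun x : ∀ i, Multiplicative (ZMod (p ^ α i)) => x ^ p ^ a = 1)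
        = Fintype.piFinset (fun i => Finset.univ.filter
            fun y : Multiplicative (ZMod (p ^ α i)) => y ^ p ^ a = 1) := by
      ext x
      simp only [Finset.mem_filter, Finset.mem_univ, true_and, Fintype.mem_piFinset,
        funext_iff, Pi.pow_apply, Pi.one_apply]
    rw [hset, Fintype.card_piFinset]
    push_cast
    have hcoord : ∀ i : Fin (k + 1),
        ((Finset.univ.filter fun y : Multiplicative (ZMod (p ^ α i)) =>
            y ^ p ^ a = 1).card : ℤ) = (p : ℤ) ^ min (α i) a := by
      intro i
      rw [count_pow_eq_one_zmod, hgcd]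
      push_cast
      ring
    rw [Finset.prod_congr rfl fun i _ => hcoord i, hS, Finset.prod_pow_eq_pow_sum]
  -- every element is killed by p ^ A
  have hkill : ∀ x : ∀ i, Multiplicative (ZMod (p ^ α i)), x ^ p ^ A = 1 := by
    intro x
    funext i
    have h2 : x i ^ p ^ α i = 1 := by
      apply Multiplicative.toAdd.injective
      simp [toAdd_pow, nsmul_eq_mul, ZMod.natCast_self]
    obtain ⟨c, hcdvd⟩ := pow_dvd_pow p (hmono (Fin.le_last i))
    have : (x ^ p ^ A) i = x i ^ p ^ A := rfl
    rw [this, hcdvd, pow_mul, h2, one_pow]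
    rfl
  -- the pointwise order formula
  have horder : ∀ x : ∀ i, Multiplicative (ZMod (p ^ α i)),
      (orderOf x : ℤ) = 1 + ∑ j ∈ Finset.range A,
        (if x ^ p ^ j = 1 then (0 : ℤ) else (p : ℤ) ^ (j + 1) - (p : ℤ) ^ j) := by
    intro x
    obtain ⟨v, hvle, hv⟩ := (Nat.dvd_prime_pow hp).mp (orderOf_dvd_of_pow_eq_one (hkill x))
    have hcond : ∀ j : ℕ, (x ^ p ^ j = 1) ↔ v ≤ j := by
      intro j
      rw [← orderOf_dvd_iff_pow_eq_one, hv]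
      exact Nat.pow_dvd_pow_iff_le_right hp1
    have hsum : ∑ j ∈ Finset.range A,
        (if x ^ p ^ j = 1 then (0 : ℤ) else (p : ℤ) ^ (j + 1) - (p : ℤ) ^ j)
        = ∑ j ∈ Finset.range v, ((p : ℤ) ^ (j + 1) - (p : ℤ) ^ j) := by
      rw [← Finset.sum_subset (Finset.range_subset_range.mpr hvle)
        (fun j _ hj => if_pos ((hcond j).mpr
          (le_of_not_gt fun h => hj (Finset.mem_range.mpr h))))]
      exact Finset.sum_congr rfl fun j hj =>
        if_neg fun h => absurd ((hcond j).mp h) (not_le.mpr (Finset.mem_range.mp hj))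
    rw [hv, hsum, Finset.sum_range_sub (fun j => (p : ℤ) ^ j)]
    push_cast
    ring
  -- cardinality of the whole group
  have hcardG : ((Fintype.card (∀ i, Multiplicative (ZMod (p ^ α i))) : ℤ)) = (p : ℤ) ^ S A := by
    rw [← hcount A, Finset.filter_true_of_mem fun x _ => hkill x, Finset.card_univ]
  -- compute psi
  have hpsi : (psi (∀ i, Multiplicative (ZMod (p ^ α i))) : ℤ)
      = (p : ℤ) ^ S A + ∑ j ∈ Finset.range A,
          (((p : ℤ) ^ (j + 1) - (p : ℤ) ^ j) * ((p : ℤ) ^ S A - (p : ℤ) ^ S j)) := by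
    rw [psi, Nat.cast_sum, Finset.sum_congr rfl fun x _ => horder x, Finset.sum_add_distrib,
      Finset.sum_const, Finset.card_univ, nsmul_eq_mul, mul_one, hcardG, Finset.sum_comm]
    congr 1
    refine Finset.sum_congr rfl fun j hj => ?_
    rw [Finset.sum_ite, Finset.sum_const_zero, Finset.sum_const, zero_add, nsmul_eq_mul]
    have hsplit := Finset.card_filter_add_card_filter_not
      (s := (Finset.univ : Finset (∀ i, Multiplicative (ZMod (p ^ α i)))))
      (p := fun x => x ^ p ^ j = 1)
    have hsplit' : ((Finset.univ.filter fun x : ∀ i, Multiplicative (ZMod (p ^ α i)) =>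
          x ^ p ^ j = 1).card : ℤ)
        + ((Finset.univ.filter fun x : ∀ i, Multiplicative (ZMod (p ^ α i)) =>
          ¬ x ^ p ^ j = 1).card : ℤ)
        = (Fintype.card (∀ i, Multiplicative (ZMod (p ^ α i))) : ℤ) := by
      rw [← Finset.card_univ]
      exact_mod_cast congrArg (Nat.cast : ℕ → ℤ) hsplit
    have hneg : ((Finset.univ.filter fun x : ∀ i, Multiplicative (ZMod (p ^ α i)) =>
          ¬ x ^ p ^ j = 1).card : ℤ) = (p : ℤ) ^ S A - (p : ℤ) ^ S j := by
      have := hcount j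
      linarith [hsplit', hcardG]
    rw [hneg]
    ring
  rw [hpsi, ← Finset.Ico_add_one_right_eq_Icc, Finset.sum_Ico_eq_sum_range, Nat.add_sub_cancel]
  -- rewrite each summand of the right hand side
  have hstep : ∀ j ∈ Finset.range A,
      ((p : ℤ) ^ (2 * (1 + j)) * (p : ℤ) ^ (∑ i : Fin k, min (α i.castSucc) (1 + j))
        - (p : ℤ) ^ (2 * (1 + j) - 1) * (p : ℤ) ^ (∑ i : Fin k, min (α i.castSucc) (1 + j - 1)))
      = (p : ℤ) ^ (j + 1) * (p : ℤ) ^ S (j + 1) - (p : ℤ) ^ (j + 1) * (p : ℤ) ^ S j := by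
    intro j hj
    have hjA : j < A := Finset.mem_range.mp hj
    have hS1 : S (j + 1) = (∑ i : Fin k, min (α i.castSucc) (1 + j)) + (j + 1) := by
      rw [hS]
      simp only
      rw [Fin.sum_univ_castSucc]
      congr 1
      · exact Finset.sum_congr rfl fun i _ => by rw [Nat.add_comm 1 j]
      · exact min_eq_right (by omega)
    have hS0 : S j = (∑ i : Fin k, min (α i.castSucc) (1 + j - 1)) + j := by
      rw [hS]
      simp only
      rw [Fin.sum_univ_castSucc]
      congr 1
      · exact Finset.sum_congr rfl fun i _ => by norm_num
      · exact min_eq_right (by omega)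
    have h2 : 2 * (1 + j) = (j + 1) + (j + 1) := by ring
    have h3 : 2 * (1 + j) - 1 = (j + 1) + j := by omega
    rw [hS1, hS0, h3, h2, pow_add, pow_add, pow_add, pow_add]
    ring
  rw [Finset.sum_congr rfl hstep]
  -- telescoping
  set h : ℕ → ℤ := fun j => (p : ℤ) ^ j * (p : ℤ) ^ S A - (p : ℤ) ^ j * (p : ℤ) ^ S j with hh
  have hterm : ∀ j ∈ Finset.range A,
      (((p : ℤ) ^ (j + 1) - (p : ℤ) ^ j) * ((p : ℤ) ^ S A - (p : ℤ) ^ S j))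
        - ((p : ℤ) ^ (j + 1) * (p : ℤ) ^ S (j + 1) - (p : ℤ) ^ (j + 1) * (p : ℤ) ^ S j)
      = h (j + 1) - h j := by
    intro j _
    rw [hh]
    simp only
    ring
  have hsum2 : (∑ j ∈ Finset.range A, (((p : ℤ) ^ (j + 1) - (p : ℤ) ^ j)
        * ((p : ℤ) ^ S A - (p : ℤ) ^ S j)))
      - (∑ j ∈ Finset.range A, ((p : ℤ) ^ (j + 1) * (p : ℤ) ^ S (j + 1)
        - (p : ℤ) ^ (j + 1) * (p : ℤ) ^ S j))
      = h A - h 0 := by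
    rw [← Finset.sum_sub_distrib, Finset.sum_congr rfl hterm, Finset.sum_range_sub h]
  have hA0 : h A = 0 := by rw [hh]; simp
  have h00 : h 0 = (p : ℤ) ^ S A - 1 := by
    rw [hh]
    simp only [pow_zero, one_mul]
    have : S 0 = 0 := by rw [hS]; simp
    rw [this, pow_zero]
  linarith [hsum2, hA0, h00]
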